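/- Let M ≥ 2. Let T₁ ∈ ℝ^{m×M}, T₂ ∈ ℝ^{n×M}, T₃ ∈ ℝ^{p×M} be matrices of full column rank M whose columns each sum to 1, and let Λ = diag(π₁,…,π_M) with π_α > 0 for all α. Let T₁' ∈ ℝ^{m×M}, T₂' ∈ ℝ^{n×M}, T₃' ∈ ℝ^{p×M} be matrices whose columns each sum to 1, and let Λ' = diag(π₁',…,π_M'). If the triple products are equal, [T₁Λ, T₂, T₃] = [T₁'Λ', T₂', T₃'], then there exists an M×M permutation matrix P such that T₁ = T₁'P, T₂ = T₂'P, T₃ = T₃'P, and Λ = PᵀΛ'P. -/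

import Mathlib

open Matrix


lemma exists_left_inv {m M : ℕ} (T : Matrix (Fin m) (Fin M) ℝ)
    (h : LinearIndependent ℝ (fun α : Fin M => fun i : Fin m => T i α)) :
    ∃ L : Matrix (Fin M) (Fin m) ℝ, L * T = 1 := by
  have hinj : Function.Injective T.mulVec := by
    rw [Matrix.mulVec_injective_iff]
    exact h
  have hker : LinearMap.ker (Matrix.toLin' T) = ⊥ := by
    rw [LinearMap.ker_eq_bot]
    exact hinj
  obtain ⟨g, hg⟩ := LinearMap.exists_leftInverse_of_injective (Matrix.toLin' T) hker
  refine ⟨LinearMap.toMatrix' g, ?_⟩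
  have := congrArg LinearMap.toMatrix' hg
  rwa [LinearMap.toMatrix'_comp, LinearMap.toMatrix'_toLin', LinearMap.toMatrix'_id] at this

lemma sumCollapse3 {M : ℕ} (σ : Equiv.Perm (Fin M)) (f : Fin M → ℝ) (γ : Fin M) :
    ∑ β, f β * (if σ β = γ then (1:ℝ) else 0) = f (σ.symm γ) := by
  have h : ∀ β, f β * (if σ β = γ then (1:ℝ) else 0)
      = if β = σ.symm γ then f β else 0 := by
    intro β
    by_cases hb : β = σ.symm γ
    · subst hb; simp
    · have : σ β ≠ γ := fun hc => hb (by rw [← hc]; simp)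
      simp [hb, this]
  rw [Finset.sum_congr rfl fun β _ => h β, Finset.sum_ite_eq']
  simp


/-- **Uniqueness of the triple-product decomposition with stochastic factors.**
Let `M ≥ 2`, let `T₁, T₂, T₃` be real matrices with `M` columns of full column rank whose
columns each sum to `1`, and let `Λ = diag(π)` with `π α > 0` for all `α`. Let
`T₁', T₂', T₃'` be matrices of the same sizes whose columns each sum to `1`, and
`Λ' = diag(π')`. If the triple products are equal, `[T₁Λ, T₂, T₃] = [T₁'Λ', T₂', T₃']`
(entrywise `∑ α, T₁ i α * π α * T₂ j α * T₃ k α = ∑ α, T₁' i α * π' α * T₂' j α * T₃' k α`),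
then there is an `M×M` permutation matrix `P` with `T₁ = T₁'P`, `T₂ = T₂'P`, `T₃ = T₃'P`,
and `Λ = P.transpose Λ' P`. -/
theorem triple_product_decomposition_uniqueness
    (M m n p : ℕ) (hM : 2 ≤ M)
    (T₁ : Matrix (Fin m) (Fin M) ℝ) (T₂ : Matrix (Fin n) (Fin M) ℝ)
    (T₃ : Matrix (Fin p) (Fin M) ℝ)
    (h₁ : LinearIndependent ℝ (fun α : Fin M => fun i : Fin m => T₁ i α))
    (h₂ : LinearIndependent ℝ (fun α : Fin M => fun j : Fin n => T₂ j α))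
    (h₃ : LinearIndependent ℝ (fun α : Fin M => fun k : Fin p => T₃ k α))
    (hs₁ : ∀ α, ∑ i, T₁ i α = 1) (hs₂ : ∀ α, ∑ j, T₂ j α = 1)
    (hs₃ : ∀ α, ∑ k, T₃ k α = 1)
    (π : Fin M → ℝ) (hπ : ∀ α, 0 < π α)
    (T₁' : Matrix (Fin m) (Fin M) ℝ) (T₂' : Matrix (Fin n) (Fin M) ℝ)
    (T₃' : Matrix (Fin p) (Fin M) ℝ)
    (hs₁' : ∀ α, ∑ i, T₁' i α = 1) (hs₂' : ∀ α, ∑ j, T₂' j α = 1)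
    (hs₃' : ∀ α, ∑ k, T₃' k α = 1)
    (π' : Fin M → ℝ)
    (heq : ∀ (i : Fin m) (j : Fin n) (k : Fin p),
      ∑ α, T₁ i α * π α * T₂ j α * T₃ k α =
      ∑ α, T₁' i α * π' α * T₂' j α * T₃' k α) :
    ∃ P : Matrix (Fin M) (Fin M) ℝ,
      (∃ σ : Equiv.Perm (Fin M),
        P = Matrix.of fun i j => if σ i = j then (1 : ℝ) else 0) ∧
      T₁ = T₁' * P ∧ T₂ = T₂' * P ∧ T₃ = T₃' * P ∧
      Matrix.diagonal π = P.transpose * Matrix.diagonal π' * P := by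
  obtain ⟨A, hAdef⟩ : ∃ A, A = T₁ * Matrix.diagonal π := ⟨_, rfl⟩
  obtain ⟨A', hA'def⟩ : ∃ A', A' = T₁' * Matrix.diagonal π' := ⟨_, rfl⟩
  have hA : ∀ i α, A i α = T₁ i α * π α := by
    intro i α; rw [hAdef, Matrix.mul_diagonal]
  have hA' : ∀ i α, A' i α = T₁' i α * π' α := by
    intro i α; rw [hA'def, Matrix.mul_diagonal]
  obtain ⟨L₁, hL₁⟩ := exists_left_inv T₁ h₁
  obtain ⟨L₂, hL₂⟩ := exists_left_inv T₂ h₂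
  obtain ⟨LA, hLAdef⟩ : ∃ LA, LA = Matrix.diagonal (fun α => (π α)⁻¹) * L₁ := ⟨_, rfl⟩
  have hLA : LA * A = 1 := by
    rw [hLAdef, hAdef]
    rw [Matrix.mul_assoc, ← Matrix.mul_assoc L₁, hL₁, Matrix.one_mul,
      Matrix.diagonal_mul_diagonal]
    rw [show (fun α => (π α)⁻¹ * π α) = fun _ => (1:ℝ) from
      funext fun α => inv_mul_cancel₀ (hπ α).ne', Matrix.diagonal_one]
  -- summed identity
  have hS : A * T₂ᵀ = A' * T₂'ᵀ := by
    ext i j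
    rw [Matrix.mul_apply, Matrix.mul_apply]
    have lhs : ∑ α, A i α * T₂ᵀ α j = ∑ k, ∑ α, T₁ i α * π α * T₂ j α * T₃ k α := by
      rw [Finset.sum_comm]
      refine Finset.sum_congr rfl fun α _ => ?_
      rw [← Finset.mul_sum, hs₃ α, mul_one, hA, Matrix.transpose_apply]
    have rhs : ∑ α, A' i α * T₂'ᵀ α j = ∑ k, ∑ α, T₁' i α * π' α * T₂' j α * T₃' k α := by
      rw [Finset.sum_comm]
      refine Finset.sum_congr rfl fun α _ => ?_
      rw [← Finset.mul_sum, hs₃' α, mul_one, hA', Matrix.transpose_apply]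
    rw [lhs, rhs]
    exact Finset.sum_congr rfl fun k _ => heq i j k
  -- slice identities
  have hslice : ∀ k, A * Matrix.diagonal (fun α => T₃ k α) * T₂ᵀ
      = A' * Matrix.diagonal (fun α => T₃' k α) * T₂'ᵀ := by
    intro k
    ext i j
    rw [Matrix.mul_apply, Matrix.mul_apply]
    have lhs : ∑ α, (A * Matrix.diagonal fun α => T₃ k α) i α * T₂ᵀ α j
        = ∑ α, T₁ i α * π α * T₂ j α * T₃ k α := by
      refine Finset.sum_congr rfl fun α _ => ?_
      rw [Matrix.mul_diagonal, hA, Matrix.transpose_apply]; ring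
    have rhs : ∑ α, (A' * Matrix.diagonal fun α => T₃' k α) i α * T₂'ᵀ α j
        = ∑ α, T₁' i α * π' α * T₂' j α * T₃' k α := by
      refine Finset.sum_congr rfl fun α _ => ?_
      rw [Matrix.mul_diagonal, hA', Matrix.transpose_apply]; ring
    rw [lhs, rhs]
    exact heq i j k
  obtain ⟨F, hFdef⟩ : ∃ F, F = LA * A' := ⟨_, rfl⟩
  obtain ⟨G, hGdef⟩ : ∃ G, G = L₂ * T₂' := ⟨_, rfl⟩
  have hFG : F * Gᵀ = 1 := by
    have h1 : LA * (A * T₂ᵀ) * L₂ᵀ = 1 := by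
      rw [← Matrix.mul_assoc, hLA, Matrix.one_mul, ← Matrix.transpose_mul, hL₂,
        Matrix.transpose_one]
    rw [hS] at h1
    rw [hFdef, hGdef, Matrix.transpose_mul, Matrix.mul_assoc LA A',
      ← Matrix.mul_assoc A', ← Matrix.mul_assoc LA]
    exact h1
  have hGF : Gᵀ * F = 1 := mul_eq_one_comm.mp hFG
  -- B = B' Fᵀ
  have hB : T₂ = T₂' * Fᵀ := by
    have h1 : LA * (A * T₂ᵀ) = T₂ᵀ := by rw [← Matrix.mul_assoc, hLA, Matrix.one_mul]
    rw [hS, ← Matrix.mul_assoc, ← hFdef] at h1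
    have h2 := congrArg Matrix.transpose h1.symm
    rwa [Matrix.transpose_transpose, Matrix.transpose_mul, Matrix.transpose_transpose] at h2
  -- A = A' Gᵀ
  have hAG : A = A' * Gᵀ := by
    have h1 : A * T₂ᵀ * L₂ᵀ = A := by
      rw [Matrix.mul_assoc, ← Matrix.transpose_mul, hL₂, Matrix.transpose_one, Matrix.mul_one]
    rw [hS, Matrix.mul_assoc, ← Matrix.transpose_mul, ← hGdef] at h1
    exact h1.symm
  -- commutation
  have hcomm : ∀ k, Matrix.diagonal (fun α => T₃ k α) * F
      = F * Matrix.diagonal (fun α => T₃' k α) := by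
    intro k
    have h1 : LA * (A * Matrix.diagonal (fun α => T₃ k α) * T₂ᵀ) * L₂ᵀ
        = Matrix.diagonal (fun α => T₃ k α) := by
      rw [Matrix.mul_assoc A, ← Matrix.mul_assoc LA, hLA, Matrix.one_mul,
        Matrix.mul_assoc, ← Matrix.transpose_mul, hL₂, Matrix.transpose_one, Matrix.mul_one]
    rw [hslice k] at h1
    have h2 : LA * (A' * Matrix.diagonal (fun α => T₃' k α) * T₂'ᵀ) * L₂ᵀ
        = F * Matrix.diagonal (fun α => T₃' k α) * Gᵀ := by
      rw [hFdef, hGdef, Matrix.transpose_mul]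
      simp only [← Matrix.mul_assoc]
    rw [h2] at h1
    rw [← h1, Matrix.mul_assoc (F * Matrix.diagonal fun α => T₃' k α) Gᵀ F, hGF,
      Matrix.mul_one]
  have hkey : ∀ α β, F α β ≠ 0 → ∀ k, T₃ k α = T₃' k β := by
    intro α β hne k
    have h := congrFun (congrFun (hcomm k) α) β
    rw [Matrix.diagonal_mul, Matrix.mul_diagonal] at h
    rw [mul_comm (F α β) (T₃' k β)] at h
    exact mul_right_cancel₀ hne h
  have hinj₃ : Function.Injective (fun α : Fin M => fun k : Fin p => T₃ k α) := h₃.injective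
  have hex : ∀ β, ∃ α, F α β ≠ 0 := by
    intro β
    by_contra hc
    push_neg at hc
    have h := congrFun (congrFun hGF β) β
    rw [Matrix.mul_apply, Matrix.one_apply_eq] at h
    simp only [hc, mul_zero, Finset.sum_const_zero] at h
    exact zero_ne_one h
  choose r hr using hex
  have huniq : ∀ β α, F α β ≠ 0 → α = r β := by
    intro β α hα
    apply hinj₃
    funext k
    show T₃ k α = T₃ k (r β)
    rw [hkey α β hα k, ← hkey (r β) β (hr β) k]
  have rinj : Function.Injective r := by
    intro β β' hbb
    by_contra hne
    have h1 : Gᵀ β (r β) * F (r β) β = 1 := by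
      have h := congrFun (congrFun hGF β) β
      rw [Matrix.mul_apply, Matrix.one_apply_eq] at h
      rw [← h]
      symm
      apply Finset.sum_eq_single
      · intro α _ hα
        by_cases hz : F α β = 0
        · rw [hz, mul_zero]
        · exact absurd (huniq β α hz) hα
      · simp
    have h2 : Gᵀ β (r β) * F (r β) β' = 0 := by
      have h := congrFun (congrFun hGF β) β'
      rw [Matrix.mul_apply, Matrix.one_apply_ne hne] at h
      rw [← h]
      symm
      apply Finset.sum_eq_single
      · intro α _ hα
        by_cases hz : F α β' = 0
        · rw [hz, mul_zero]
        · rw [huniq β' α hz, ← hbb] at hα; exact absurd rfl hα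
      · simp [hbb]
    rw [mul_eq_zero] at h2
    rcases h2 with h2 | h2
    · rw [h2, zero_mul] at h1; exact zero_ne_one h1
    · rw [hbb] at h2; exact hr β' h2
  have rbij : Function.Bijective r := Finite.injective_iff_bijective.mp rinj
  obtain ⟨σ, hσ⟩ : ∃ σ : Equiv.Perm (Fin M), ∀ β, σ β = r β :=
    ⟨Equiv.ofBijective r rbij, fun β => rfl⟩
  have hF0 : ∀ α β, α ≠ r β → F α β = 0 := by
    intro α β hne
    by_contra hz
    exact hne (huniq β α hz)
  have hd : ∀ β, F (r β) β = 1 := by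
    intro β
    have hcol : ∀ j, T₂ j (r β) = T₂' j β * F (r β) β := by
      intro j
      have h := congrFun (congrFun hB j) (r β)
      rw [Matrix.mul_apply] at h
      rw [h]
      apply Finset.sum_eq_single
      · intro β' _ hβ'
        have hz : F (r β) β' = 0 := by
          by_contra hzz
          exact hβ' (rinj (huniq β' (r β) hzz).symm)
        rw [Matrix.transpose_apply, hz, mul_zero]
      · simp
    have h1 : ∑ j, T₂ j (r β) = ∑ j, T₂' j β * F (r β) β :=
      Finset.sum_congr rfl fun j _ => hcol j
    rw [hs₂ (r β), ← Finset.sum_mul, hs₂' β, one_mul] at h1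
    exact h1.symm
  have hFP : F = Matrix.of (fun α β => if σ β = α then (1:ℝ) else 0) := by
    ext α β
    show F α β = if σ β = α then (1:ℝ) else 0
    by_cases hc : α = r β
    · subst hc
      rw [hd β, hσ β, if_pos rfl]
    · rw [hF0 α β hc]
      have hne : σ β ≠ α := fun hh => hc (by rw [← hh, hσ β])
      rw [if_neg hne]
  obtain ⟨P, hPdef⟩ : ∃ P : Matrix (Fin M) (Fin M) ℝ,
      P = Matrix.of (fun α β => if σ α = β then (1:ℝ) else 0) := ⟨_, rfl⟩
  have hPapp : ∀ α β, P α β = if σ α = β then (1:ℝ) else 0 := by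
    intro α β; rw [hPdef]; rfl
  have hFPt : F = Pᵀ := by
    rw [hFP]
    ext α β
    show (if σ β = α then (1:ℝ) else 0) = Pᵀ α β
    rw [Matrix.transpose_apply, hPapp]
  have hPtP : Pᵀ * P = 1 := by
    ext γ δ
    rw [Matrix.mul_apply]
    have hterm : ∀ α, Pᵀ γ α * P α δ
        = (if σ α = γ then (1:ℝ) else 0) * (if σ α = δ then (1:ℝ) else 0) := by
      intro α; rw [Matrix.transpose_apply, hPapp, hPapp]
    rw [Finset.sum_congr rfl fun α _ => hterm α,
      sumCollapse3 σ (fun α => if σ α = γ then (1:ℝ) else 0) δ]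
    rcases eq_or_ne γ δ with h | h
    · subst h
      rw [Matrix.one_apply_eq, if_pos (by simp)]
    · rw [Matrix.one_apply_ne h, if_neg (by simpa using (Ne.symm h))]
  have hGP : Gᵀ = P := by
    calc Gᵀ = Gᵀ * (F * P) := by rw [hFPt, hPtP, Matrix.mul_one]
      _ = (Gᵀ * F) * P := by rw [Matrix.mul_assoc]
      _ = P := by rw [hGF, Matrix.one_mul]
  have hmulP : ∀ {q : ℕ} (X : Matrix (Fin q) (Fin M) ℝ) (i : Fin q) (γ : Fin M),
      (X * P) i γ = X i (σ.symm γ) := by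
    intro q X i γ
    rw [Matrix.mul_apply]
    rw [Finset.sum_congr rfl fun β _ => by rw [hPapp]]
    exact sumCollapse3 σ (fun β => X i β) γ
  have hAP : A = A' * P := by rw [hAG, hGP]
  have hAe : ∀ i γ, T₁ i γ * π γ = T₁' i (σ.symm γ) * π' (σ.symm γ) := by
    intro i γ
    have h := congrFun (congrFun hAP i) γ
    rw [hmulP A' i γ, hA, hA'] at h
    exact h
  have hππ : ∀ γ, π γ = π' (σ.symm γ) := by
    intro γ
    have h1 : ∑ i, T₁ i γ * π γ = ∑ i, T₁' i (σ.symm γ) * π' (σ.symm γ) :=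
      Finset.sum_congr rfl fun i _ => hAe i γ
    rw [← Finset.sum_mul, ← Finset.sum_mul, hs₁, hs₁', one_mul, one_mul] at h1
    exact h1
  refine ⟨P, ⟨σ, hPdef⟩, ?_, ?_, ?_, ?_⟩
  · -- T₁ = T₁' * P
    ext i γ
    rw [hmulP T₁' i γ]
    have h1 := hAe i γ
    rw [← hππ γ] at h1
    exact mul_right_cancel₀ (hπ γ).ne' h1
  · -- T₂
    rw [hB, hFPt, Matrix.transpose_transpose]
  · -- T₃
    ext k γ
    rw [hmulP T₃' k γ]
    have hF1 : F γ (σ.symm γ) ≠ 0 := by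
      have h : F γ (σ.symm γ) = 1 := by
        rw [hFP]
        show (if σ (σ.symm γ) = γ then (1:ℝ) else 0) = 1
        rw [if_pos (by simp)]
      rw [h]; exact one_ne_zero
    exact hkey γ (σ.symm γ) hF1 k
  · -- diagonal
    ext γ δ
    rw [Matrix.mul_apply]
    have hterm : ∀ α, (Pᵀ * Matrix.diagonal π') γ α * P α δ
        = ((if σ α = γ then (1:ℝ) else 0) * π' α) * (if σ α = δ then (1:ℝ) else 0) := by
      intro α
      rw [Matrix.mul_diagonal, Matrix.transpose_apply, hPapp, hPapp]
    rw [Finset.sum_congr rfl fun α _ => hterm α,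
      sumCollapse3 σ (fun α => (if σ α = γ then (1:ℝ) else 0) * π' α) δ]
    rcases eq_or_ne γ δ with h | h
    · subst h
      rw [Matrix.diagonal_apply_eq, hππ γ, if_pos (by simp), one_mul]
    · rw [Matrix.diagonal_apply_ne _ h, if_neg (by simpa using (Ne.symm h)), zero_mul]
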